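/- Let v > w ≥ 0, V = 2^v, W = 2^w, and set p = 2^{V+W-1} + 2^{W-1} and q = 2^{V+W} - 2^W. Then the ℓ^∞ distance between the Sobol' points x_p and x_q equals 2^{-V-W+1}. Consequently, for m = V + W + c with 0 ≤ c < W, the ℓ^∞-separation radius of the first 2^m Sobol' points satisfies q_∞(Q_{2^m}) ≤ 2^{-V-W}. -/

import Mathlib

open Finset

/-- The `i`-th binary digit of `n` (1-indexed: `n = Σ nᵢ 2^(i-1)`). -/
def bit (n i : ℕ) : ℕ := if Nat.testBit n (i-1) then 1 else 0

/-- `φ` of the digit vector of `n` truncated to `m` digits: `Σ nᵢ 2^(-i)`. -/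
noncomputable def phi (m n : ℕ) : ℝ :=
  ∑ i ∈ Finset.Icc 1 m, (bit n i : ℝ) * (2:ℝ) ^ (-(i:ℤ))

/-- The `i`-th coordinate of `P_m · (digit vector of n)` over `F₂`, where
`P_m[i][j] = C(j-1, i-1) mod 2` is the upper-triangular Pascal matrix. -/
def pbit (m n i : ℕ) : ℕ :=
  (∑ j ∈ Finset.Icc 1 m, (Nat.choose (j-1) (i-1) % 2) * bit n j) % 2

/-- `φ(P_m · n)`. -/
noncomputable def phiP (m n : ℕ) : ℝ :=
  ∑ i ∈ Finset.Icc 1 m, (pbit m n i : ℝ) * (2:ℝ) ^ (-(i:ℤ))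

/-- The `n`-th point of the two-dimensional Sobol' sequence (with `n < 2^m`). -/
noncomputable def sobol (m n : ℕ) : ℝ × ℝ := (phi m n, phiP m n)

/-- ℓ^∞ distance on ℝ². -/
noncomputable def linf (a b : ℝ × ℝ) : ℝ := max |a.1 - b.1| |a.2 - b.2|

/-- ℓ^∞ separation radius of the first `N` Sobol' points (digit length `m`). -/
noncomputable def sep (m N : ℕ) : ℝ :=
  (1/2) * sInf {d : ℝ | ∃ p q : ℕ, p < N ∧ q < N ∧ p ≠ q ∧ d = linf (sobol m p) (sobol m q)}

/-- ℓ^∞ covering radius of the first `N` Sobol' points (digit length `m`). -/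
noncomputable def cov (m N : ℕ) : ℝ :=
  sSup {r : ℝ | ∃ x : ℝ × ℝ, x.1 ∈ Set.Icc (0:ℝ) 1 ∧ x.2 ∈ Set.Icc (0:ℝ) 1 ∧
    r = sInf {d : ℝ | ∃ n : ℕ, n < N ∧ d = linf x (sobol m n)}}



lemma zc_pow (a t : ℕ) :
    ((Nat.choose (2 ^ a) t : ℕ) : ZMod 2) = if t = 0 ∨ t = 2 ^ a then 1 else 0 := by
  rcases eq_or_ne t 0 with rfl | h0
  · simp
  rcases eq_or_ne t (2 ^ a) with rfl | h1
  · simp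
  rw [if_neg (by tauto), ZMod.natCast_eq_zero_iff]
  exact Nat.prime_two.dvd_choose_pow h0 h1

lemma zc_step (a r k : ℕ) :
    ((Nat.choose (2 ^ a + r) k : ℕ) : ZMod 2) =
      (Nat.choose r k : ZMod 2) +
        if 2 ^ a ≤ k then (Nat.choose r (k - 2 ^ a) : ZMod 2) else 0 := by
  have hA : 0 < 2 ^ a := Nat.two_pow_pos a
  rw [Nat.add_choose_eq]
  push_cast
  rw [Finset.Nat.sum_antidiagonal_eq_sum_range_succ_mk]
  have hcong : ∀ i ∈ Finset.range (k + 1),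
      ((Nat.choose (2 ^ a) i : ZMod 2) * (Nat.choose r (k - i) : ZMod 2))
      = ((if i = 0 then (Nat.choose r (k - i) : ZMod 2) else 0)
        + (if i = 2 ^ a then (Nat.choose r (k - i) : ZMod 2) else 0)) := by
    intro i _
    rw [zc_pow]
    by_cases h0 : i = 0
    · simp [h0, hA.ne]
    · by_cases h1 : i = 2 ^ a
      · simp [h1, hA.ne']
      · simp [h0, h1]
  rw [Finset.sum_congr rfl hcong, Finset.sum_add_distrib,
    Finset.sum_ite_eq' (Finset.range (k + 1)) 0,
    Finset.sum_ite_eq' (Finset.range (k + 1)) (2 ^ a)]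
  simp [Nat.lt_succ_iff]


lemma zc_sub_one (a t : ℕ) :
    ((Nat.choose (2 ^ a - 1) t : ℕ) : ZMod 2) = if t < 2 ^ a then 1 else 0 := by
  induction a generalizing t with
  | zero =>
    rw [show (2:ℕ) ^ 0 - 1 = 0 from rfl]
    rcases eq_or_ne t 0 with rfl | h
    · simp
    · rw [Nat.choose_eq_zero_of_lt (by omega), if_neg (by norm_num; omega)]
      simp
  | succ a ih =>
    have hA : 0 < 2 ^ a := Nat.two_pow_pos a
    have h1 : 2 ^ (a + 1) - 1 = 2 ^ a + (2 ^ a - 1) := by rw [pow_succ]; omega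
    rw [h1, zc_step]
    simp only [ih]
    have h2 : 2 ^ (a + 1) = 2 ^ a + 2 ^ a := by rw [pow_succ]; omega
    split_ifs <;> first | decide | (exfalso; omega)

lemma mod_two_of_zmod {n : ℕ} {P : Prop} [Decidable P]
    (h : ((n : ℕ) : ZMod 2) = if P then 1 else 0) : n % 2 = if P then 1 else 0 := by
  have := congrArg ZMod.val h
  rw [ZMod.val_natCast, apply_ite ZMod.val] at this
  simpa [show ZMod.val (1 : ZMod 2) = 1 from rfl] using this

lemma testBit_pp {a b k : ℕ} (h : b < a) :
    Nat.testBit (2 ^ a + 2 ^ b) k = true ↔ (k = a ∨ k = b) := by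
  have hb : (2 : ℕ) ^ b < 2 ^ a := Nat.pow_lt_pow_right one_lt_two h
  have h1 := Nat.testBit_two_pow_mul_add 1 hb k
  rw [mul_one] at h1
  rw [h1]
  by_cases hk : k < a
  · rw [if_pos hk, Nat.testBit_two_pow]
    simp only [decide_eq_true_eq]
    omega
  · rw [if_neg hk, Nat.testBit_one_eq_true_iff_self_eq_zero]
    omega

lemma testBit_qq {a b k : ℕ} (h : b ≤ a) :
    Nat.testBit (2 ^ a - 2 ^ b) k = true ↔ (b ≤ k ∧ k < a) := by
  have key : 2 ^ a - 2 ^ b = 2 ^ b * (2 ^ (a - b) - 1) + 0 := by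
    rw [add_zero, Nat.mul_sub, mul_one, ← pow_add, Nat.add_sub_cancel' h]
  rw [key, Nat.testBit_two_pow_mul_add _ (Nat.two_pow_pos b) k]
  by_cases hk : k < b
  · rw [if_pos hk]
    simp only [Nat.zero_testBit, Bool.false_eq_true, false_iff]
    omega
  · rw [if_neg hk, Nat.testBit_two_pow_sub_one]
    simp only [decide_eq_true_eq]
    have hpow : 2 ^ b ≤ 2 ^ a := Nat.pow_le_pow_right (by norm_num) h
    omega

lemma geom_sum_Icc (a b : ℕ) (h : a ≤ b) :
    ∑ i ∈ Icc (a + 1) b, (2 : ℝ) ^ (-(i : ℤ)) = (2 : ℝ) ^ (-(a : ℤ)) - (2 : ℝ) ^ (-(b : ℤ)) := by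
  induction b, h using Nat.le_induction with
  | base => rw [Finset.Icc_eq_empty (by omega)]; simp
  | succ b hb ih =>
    rw [Finset.sum_Icc_succ_top (by omega), ih]
    have h2 : (2 : ℝ) ^ (-((b : ℤ) + 1)) = (2 : ℝ) ^ (-(b : ℤ)) * 2⁻¹ := by
      rw [show -((b : ℤ) + 1) = -(b : ℤ) + (-1) by ring, zpow_add₀ (two_ne_zero)]
      norm_num
    push_cast
    rw [h2]
    ring

lemma sum_two_pts (m a b : ℕ) (ha : a ∈ Icc 1 m) (hb : b ∈ Icc 1 m) (hab : a ≠ b)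
    (f : ℕ → ℝ) :
    ∑ i ∈ Icc 1 m, (if i = a ∨ i = b then 1 else 0) * f i = f a + f b := by
  have hcong : ∀ i ∈ Icc 1 m, (if i = a ∨ i = b then (1:ℝ) else 0) * f i
      = (if i = a then f i else 0) + (if i = b then f i else 0) := by
    intro i _
    by_cases h1 : i = a
    · subst h1; simp [hab]
    · by_cases h2 : i = b
      · subst h2; simp [h1, Ne.symm hab]
      · simp [h1, h2]
  rw [Finset.sum_congr rfl hcong, Finset.sum_add_distrib,
    Finset.sum_ite_eq' _ a, Finset.sum_ite_eq' _ b, if_pos ha, if_pos hb]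

lemma sum_window (m a b : ℕ) (hb : b ≤ m) (f : ℕ → ℝ) :
    ∑ i ∈ Icc 1 m, (if a + 1 ≤ i ∧ i ≤ b then 1 else 0) * f i
      = ∑ i ∈ Icc (a + 1) b, f i := by
  have hcong : ∀ i ∈ Icc 1 m, (if a + 1 ≤ i ∧ i ≤ b then (1:ℝ) else 0) * f i
      = if i ∈ Icc (a + 1) b then f i else 0 := by
    intro i _
    simp only [Finset.mem_Icc]
    split_ifs <;> simp
  rw [Finset.sum_congr rfl hcong, Finset.sum_ite_mem,
    Finset.inter_eq_right.mpr (fun x hx => by simp at hx ⊢; omega)]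


lemma bit_pp {a b i : ℕ} (hb : b < a) (hi : 1 ≤ i) :
    bit (2 ^ a + 2 ^ b) i = if i = a + 1 ∨ i = b + 1 then 1 else 0 := by
  have hiff : Nat.testBit (2 ^ a + 2 ^ b) (i - 1) = true ↔ (i = a + 1 ∨ i = b + 1) := by
    rw [testBit_pp hb]; omega
  unfold bit
  by_cases hc : i = a + 1 ∨ i = b + 1
  · rw [if_pos (hiff.mpr hc), if_pos hc]
  · rw [if_neg (fun hh => hc (hiff.mp hh)), if_neg hc]

lemma bit_qq {a b i : ℕ} (hb : b ≤ a) (hi : 1 ≤ i) :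
    bit (2 ^ a - 2 ^ b) i = if b + 1 ≤ i ∧ i ≤ a then 1 else 0 := by
  have hiff : Nat.testBit (2 ^ a - 2 ^ b) (i - 1) = true ↔ (b + 1 ≤ i ∧ i ≤ a) := by
    rw [testBit_qq hb]; omega
  unfold bit
  by_cases hc : b + 1 ≤ i ∧ i ≤ a
  · rw [if_pos (hiff.mpr hc), if_pos hc]
  · rw [if_neg (fun hh => hc (hiff.mp hh)), if_neg hc]

lemma hockey (N k : ℕ) : ∑ t ∈ range N, Nat.choose t k = Nat.choose N (k + 1) := by
  induction N with
  | zero => simp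
  | succ N ih => rw [Finset.sum_range_succ, ih, Nat.choose_succ_succ' N k]; omega

lemma shift_sum (a b : ℕ) (f : ℕ → ℕ) :
    ∑ j ∈ Icc (a + 1) b, f (j - 1) = ∑ t ∈ Ico a b, f t := by
  refine Finset.sum_nbij' (fun j => j - 1) (fun t => t + 1) ?_ ?_ ?_ ?_ ?_ <;>
      (intro x hx; simp only [Finset.mem_Icc, Finset.mem_Ico] at hx ⊢) <;>
    first | omega | rfl | (congr 1; omega)

lemma sum_window_nat (m a b : ℕ) (hb : b ≤ m) (f : ℕ → ℕ) :
    ∑ i ∈ Icc 1 m, f i * (if a + 1 ≤ i ∧ i ≤ b then 1 else 0)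
      = ∑ i ∈ Icc (a + 1) b, f i := by
  have hcong : ∀ i ∈ Icc 1 m, f i * (if a + 1 ≤ i ∧ i ≤ b then 1 else 0)
      = if i ∈ Icc (a + 1) b then f i else 0 := by
    intro i _
    simp only [Finset.mem_Icc]
    split_ifs <;> simp
  rw [Finset.sum_congr rfl hcong, Finset.sum_ite_mem,
    Finset.inter_eq_right.mpr (fun x hx => by simp at hx ⊢; omega)]

lemma pbitP (v w m i : ℕ) (hvw : w < v) (hm : 2 ^ v + 2 ^ w ≤ m) (hi : i ∈ Icc 1 m) :
    pbit m (2 ^ (2 ^ v + 2 ^ w - 1) + 2 ^ (2 ^ w - 1)) i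
      = if 2 ^ v + 1 ≤ i ∧ i ≤ 2 ^ v + 2 ^ w then 1 else 0 := by
  have hW : 1 ≤ 2 ^ w := Nat.one_le_two_pow
  have hWV : 2 ^ w < 2 ^ v := Nat.pow_lt_pow_right one_lt_two hvw
  rw [Finset.mem_Icc] at hi
  unfold pbit
  have hbit : ∀ j ∈ Icc 1 m,
      (Nat.choose (j - 1) (i - 1) % 2) * bit (2 ^ (2 ^ v + 2 ^ w - 1) + 2 ^ (2 ^ w - 1)) j
      = (if j = 2 ^ v + 2 ^ w then Nat.choose (j - 1) (i - 1) % 2 else 0)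
        + (if j = 2 ^ w then Nat.choose (j - 1) (i - 1) % 2 else 0) := by
    intro j hj
    rw [Finset.mem_Icc] at hj
    rw [bit_pp (by omega) hj.1,
      show 2 ^ v + 2 ^ w - 1 + 1 = 2 ^ v + 2 ^ w by omega,
      show 2 ^ w - 1 + 1 = 2 ^ w by omega]
    by_cases h1 : j = 2 ^ v + 2 ^ w
    · rw [if_pos (Or.inl h1), if_pos h1, if_neg (by omega)]; omega
    · by_cases h2 : j = 2 ^ w
      · rw [if_pos (Or.inr h2), if_neg h1, if_pos h2]; omega
      · rw [if_neg (by tauto), if_neg h1, if_neg h2]; omega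
  rw [Finset.sum_congr rfl hbit, Finset.sum_add_distrib,
    Finset.sum_ite_eq' _ (2 ^ v + 2 ^ w), Finset.sum_ite_eq' _ (2 ^ w),
    if_pos (Finset.mem_Icc.mpr ⟨by omega, by omega⟩),
    if_pos (Finset.mem_Icc.mpr ⟨by omega, by omega⟩)]
  have e1 : Nat.choose (2 ^ v + 2 ^ w - 1) (i - 1) % 2
      = if (i - 1 < 2 ^ w ∨ (2 ^ v ≤ i - 1 ∧ i - 1 < 2 ^ v + 2 ^ w)) then 1 else 0 := by
    apply mod_two_of_zmod
    rw [show 2 ^ v + 2 ^ w - 1 = 2 ^ v + (2 ^ w - 1) by omega, zc_step]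
    simp only [zc_sub_one]
    split_ifs <;> first | decide | (exfalso; omega)
  have e2 : Nat.choose (2 ^ w - 1) (i - 1) % 2 = if i - 1 < 2 ^ w then 1 else 0 :=
    mod_two_of_zmod (zc_sub_one w (i - 1))
  rw [e1, e2]
  split_ifs <;> first | rfl | (exfalso; omega)

lemma pbitQ (v w m i : ℕ) (hvw : w < v) (hm : 2 ^ v + 2 ^ w ≤ m) (hi : i ∈ Icc 1 m) :
    pbit m (2 ^ (2 ^ v + 2 ^ w) - 2 ^ (2 ^ w)) i
      = if i = 2 ^ v ∨ i = 2 ^ v + 2 ^ w then 1 else 0 := by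
  have hW : 1 ≤ 2 ^ w := Nat.one_le_two_pow
  have hWV : 2 ^ w < 2 ^ v := Nat.pow_lt_pow_right one_lt_two hvw
  rw [Finset.mem_Icc] at hi
  unfold pbit
  have hbit : ∀ j ∈ Icc 1 m,
      (Nat.choose (j - 1) (i - 1) % 2) * bit (2 ^ (2 ^ v + 2 ^ w) - 2 ^ (2 ^ w)) j
      = (Nat.choose (j - 1) (i - 1) % 2)
          * (if 2 ^ w + 1 ≤ j ∧ j ≤ 2 ^ v + 2 ^ w then 1 else 0) := by
    intro j hj
    rw [Finset.mem_Icc] at hj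
    rw [bit_qq (by omega) hj.1]
  rw [Finset.sum_congr rfl hbit,
    sum_window_nat m (2 ^ w) (2 ^ v + 2 ^ w) (by omega)]
  have hsplit : Nat.choose (2 ^ w) (i - 1 + 1)
      + ∑ j ∈ Icc (2 ^ w + 1) (2 ^ v + 2 ^ w), Nat.choose (j - 1) (i - 1)
      = Nat.choose (2 ^ v + 2 ^ w) (i - 1 + 1) := by
    have hs := shift_sum (2 ^ w) (2 ^ v + 2 ^ w) (fun t => Nat.choose t (i - 1))
    rw [hs, ← hockey (2 ^ w) (i - 1), ← hockey (2 ^ v + 2 ^ w) (i - 1),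
      Finset.range_eq_Ico, Finset.range_eq_Ico]
    exact Finset.sum_Ico_consecutive (fun t => Nat.choose t (i - 1)) (m := 0) (n := 2 ^ w) (k := 2 ^ v + 2 ^ w) (by omega) (by omega)
  have key : (∑ j ∈ Icc (2 ^ w + 1) (2 ^ v + 2 ^ w), Nat.choose (j - 1) (i - 1)) % 2
      = if i - 1 + 1 = 2 ^ v ∨ i - 1 + 1 = 2 ^ v + 2 ^ w then 1 else 0 := by
    apply mod_two_of_zmod
    have hc := congrArg (fun x : ℕ => (x : ZMod 2)) hsplit
    push_cast at hc
    have hQ : ((∑ j ∈ Icc (2 ^ w + 1) (2 ^ v + 2 ^ w), Nat.choose (j - 1) (i - 1) : ℕ) : ZMod 2)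
        = ((Nat.choose (2 ^ v + 2 ^ w) (i - 1 + 1) : ℕ) : ZMod 2)
          - ((Nat.choose (2 ^ w) (i - 1 + 1) : ℕ) : ZMod 2) := by
      rw [← hc]; push_cast; ring
    rw [hQ, zc_step, zc_pow, zc_pow]
    split_ifs <;> first | decide | (exfalso; omega)
  have hmod : (∑ j ∈ Icc (2 ^ w + 1) (2 ^ v + 2 ^ w), Nat.choose (j - 1) (i - 1) % 2) % 2
      = (∑ j ∈ Icc (2 ^ w + 1) (2 ^ v + 2 ^ w), Nat.choose (j - 1) (i - 1)) % 2 :=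
    (Finset.sum_nat_mod _ _ _).symm
  rw [hmod, key]
  split_ifs <;> first | rfl | (exfalso; omega)

theorem stmt_14 (v w c : ℕ) (hvw : w < v) (hc : c < 2 ^ w) :
    linf (sobol (2 ^ v + 2 ^ w + c) (2 ^ (2 ^ v + 2 ^ w - 1) + 2 ^ (2 ^ w - 1)))
         (sobol (2 ^ v + 2 ^ w + c) (2 ^ (2 ^ v + 2 ^ w) - 2 ^ (2 ^ w))) =
      (2:ℝ) ^ (-(2 ^ v : ℤ) - (2 ^ w : ℤ) + 1) ∧
    sep (2 ^ v + 2 ^ w + c) (2 ^ (2 ^ v + 2 ^ w + c)) ≤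
      (2:ℝ) ^ (-(2 ^ v : ℤ) - (2 ^ w : ℤ)) := by
  have hW1 : 1 ≤ 2 ^ w := Nat.one_le_two_pow
  have hWV : 2 ^ w < 2 ^ v := Nat.pow_lt_pow_right one_lt_two hvw
  have hV2 : 2 ≤ 2 ^ v := by
    calc 2 = 2 ^ 1 := rfl
    _ ≤ 2 ^ v := Nat.pow_le_pow_right (by norm_num) (by omega)
  set m := 2 ^ v + 2 ^ w + c with hm
  -- exponent recasts
  have hexA : -((2 ^ v + 2 ^ w : ℕ) : ℤ) = -(2 ^ v : ℤ) - (2 ^ w : ℤ) := by push_cast; ring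
  have hexW : -((2 ^ w : ℕ) : ℤ) = -(2 ^ w : ℤ) := by push_cast; ring
  have hexV : -((2 ^ v : ℕ) : ℤ) = -(2 ^ v : ℤ) := by push_cast; ring
  -- the four coordinates
  have hP1 : phi m (2 ^ (2 ^ v + 2 ^ w - 1) + 2 ^ (2 ^ w - 1))
      = (2:ℝ) ^ (-(2 ^ v : ℤ) - (2 ^ w : ℤ)) + (2:ℝ) ^ (-(2 ^ w : ℤ)) := by
    unfold phi
    have hcong : ∀ i ∈ Icc 1 m,
        ((bit (2 ^ (2 ^ v + 2 ^ w - 1) + 2 ^ (2 ^ w - 1)) i : ℕ) : ℝ) * (2:ℝ) ^ (-(i:ℤ))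
        = (if i = 2 ^ v + 2 ^ w ∨ i = 2 ^ w then (1:ℝ) else 0) * (2:ℝ) ^ (-(i:ℤ)) := by
      intro i hi
      rw [Finset.mem_Icc] at hi
      rw [bit_pp (by omega) hi.1, show 2 ^ v + 2 ^ w - 1 + 1 = 2 ^ v + 2 ^ w by omega,
        show 2 ^ w - 1 + 1 = 2 ^ w by omega]
      split_ifs <;> norm_num
    have hs := sum_two_pts m (2 ^ v + 2 ^ w) (2 ^ w)
      (Finset.mem_Icc.mpr ⟨by omega, by omega⟩) (Finset.mem_Icc.mpr ⟨by omega, by omega⟩)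
      (by omega) (fun i => (2:ℝ) ^ (-(i:ℤ)))
    rw [Finset.sum_congr rfl hcong, hs, hexA, hexW]
  have hQ1 : phi m (2 ^ (2 ^ v + 2 ^ w) - 2 ^ (2 ^ w))
      = (2:ℝ) ^ (-(2 ^ w : ℤ)) - (2:ℝ) ^ (-(2 ^ v : ℤ) - (2 ^ w : ℤ)) := by
    unfold phi
    have hcong : ∀ i ∈ Icc 1 m,
        ((bit (2 ^ (2 ^ v + 2 ^ w) - 2 ^ (2 ^ w)) i : ℕ) : ℝ) * (2:ℝ) ^ (-(i:ℤ))
        = (if 2 ^ w + 1 ≤ i ∧ i ≤ 2 ^ v + 2 ^ w then (1:ℝ) else 0) * (2:ℝ) ^ (-(i:ℤ)) := by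
      intro i hi
      rw [Finset.mem_Icc] at hi
      rw [bit_qq (by omega) hi.1]
      split_ifs <;> norm_num
    have hs := sum_window m (2 ^ w) (2 ^ v + 2 ^ w) (by omega) (fun i => (2:ℝ) ^ (-(i:ℤ)))
    rw [Finset.sum_congr rfl hcong, hs, geom_sum_Icc (2 ^ w) (2 ^ v + 2 ^ w) (by omega),
      hexA, hexW]
  have hP2 : phiP m (2 ^ (2 ^ v + 2 ^ w - 1) + 2 ^ (2 ^ w - 1))
      = (2:ℝ) ^ (-(2 ^ v : ℤ)) - (2:ℝ) ^ (-(2 ^ v : ℤ) - (2 ^ w : ℤ)) := by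
    unfold phiP
    have hcong : ∀ i ∈ Icc 1 m,
        ((pbit m (2 ^ (2 ^ v + 2 ^ w - 1) + 2 ^ (2 ^ w - 1)) i : ℕ) : ℝ) * (2:ℝ) ^ (-(i:ℤ))
        = (if 2 ^ v + 1 ≤ i ∧ i ≤ 2 ^ v + 2 ^ w then (1:ℝ) else 0) * (2:ℝ) ^ (-(i:ℤ)) := by
      intro i hi
      rw [pbitP v w m i hvw (by omega) hi]
      split_ifs <;> norm_num
    have hs := sum_window m (2 ^ v) (2 ^ v + 2 ^ w) (by omega) (fun i => (2:ℝ) ^ (-(i:ℤ)))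
    rw [Finset.sum_congr rfl hcong, hs, geom_sum_Icc (2 ^ v) (2 ^ v + 2 ^ w) (by omega),
      hexA, hexV]
  have hQ2 : phiP m (2 ^ (2 ^ v + 2 ^ w) - 2 ^ (2 ^ w))
      = (2:ℝ) ^ (-(2 ^ v : ℤ)) + (2:ℝ) ^ (-(2 ^ v : ℤ) - (2 ^ w : ℤ)) := by
    unfold phiP
    have hcong : ∀ i ∈ Icc 1 m,
        ((pbit m (2 ^ (2 ^ v + 2 ^ w) - 2 ^ (2 ^ w)) i : ℕ) : ℝ) * (2:ℝ) ^ (-(i:ℤ))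
        = (if i = 2 ^ v ∨ i = 2 ^ v + 2 ^ w then (1:ℝ) else 0) * (2:ℝ) ^ (-(i:ℤ)) := by
      intro i hi
      rw [pbitQ v w m i hvw (by omega) hi]
      split_ifs <;> norm_num
    have hs := sum_two_pts m (2 ^ v) (2 ^ v + 2 ^ w)
      (Finset.mem_Icc.mpr ⟨by omega, by omega⟩) (Finset.mem_Icc.mpr ⟨by omega, by omega⟩)
      (by omega) (fun i => (2:ℝ) ^ (-(i:ℤ)))
    rw [Finset.sum_congr rfl hcong, hs, hexA, hexV]
  have hApos : (0:ℝ) < (2:ℝ) ^ (-(2 ^ v : ℤ) - (2 ^ w : ℤ)) := by positivity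
  have hT : (2:ℝ) ^ (-(2 ^ v : ℤ) - (2 ^ w : ℤ) + 1)
      = 2 * (2:ℝ) ^ (-(2 ^ v : ℤ) - (2 ^ w : ℤ)) := by
    rw [zpow_add_one₀ (two_ne_zero)]
    ring
  have hlinf : linf (sobol m (2 ^ (2 ^ v + 2 ^ w - 1) + 2 ^ (2 ^ w - 1)))
      (sobol m (2 ^ (2 ^ v + 2 ^ w) - 2 ^ (2 ^ w)))
      = (2:ℝ) ^ (-(2 ^ v : ℤ) - (2 ^ w : ℤ) + 1) := by
    simp only [linf, sobol, hP1, hQ1, hP2, hQ2]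
    rw [show ((2:ℝ) ^ (-(2 ^ v : ℤ) - (2 ^ w : ℤ)) + (2:ℝ) ^ (-(2 ^ w : ℤ)))
        - ((2:ℝ) ^ (-(2 ^ w : ℤ)) - (2:ℝ) ^ (-(2 ^ v : ℤ) - (2 ^ w : ℤ)))
        = 2 * (2:ℝ) ^ (-(2 ^ v : ℤ) - (2 ^ w : ℤ)) by ring,
      show ((2:ℝ) ^ (-(2 ^ v : ℤ)) - (2:ℝ) ^ (-(2 ^ v : ℤ) - (2 ^ w : ℤ)))
        - ((2:ℝ) ^ (-(2 ^ v : ℤ)) + (2:ℝ) ^ (-(2 ^ v : ℤ) - (2 ^ w : ℤ)))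
        = -(2 * (2:ℝ) ^ (-(2 ^ v : ℤ) - (2 ^ w : ℤ))) by ring,
      abs_neg, abs_of_nonneg (by linarith), max_self, hT]
  refine ⟨hlinf, ?_⟩
  -- part 2
  have eb : (2:ℕ) ^ (2 ^ v + 2 ^ w) = 2 * 2 ^ (2 ^ v + 2 ^ w - 1) := by
    rw [← pow_succ']
    congr 1
    omega
  have ea : (2:ℕ) ^ (2 ^ w) = 2 * 2 ^ (2 ^ w - 1) := by
    rw [← pow_succ']
    congr 1
    omega
  have ec : (2:ℕ) ^ (2 ^ w + 1) = 2 * 2 ^ (2 ^ w) := pow_succ' 2 (2 ^ w)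
  have c4 : (2:ℕ) ^ (2 ^ w + 1) ≤ 2 ^ (2 ^ v + 2 ^ w - 1) :=
    Nat.pow_le_pow_right (by norm_num) (by omega)
  have c5 : (2:ℕ) ^ (2 ^ v + 2 ^ w) ≤ 2 ^ m :=
    Nat.pow_le_pow_right (by norm_num) (by omega)
  have h1p : 1 ≤ (2:ℕ) ^ (2 ^ w - 1) := Nat.one_le_two_pow
  have h1q : 1 ≤ (2:ℕ) ^ (2 ^ w) := Nat.one_le_two_pow
  have hp : 2 ^ (2 ^ v + 2 ^ w - 1) + 2 ^ (2 ^ w - 1) < 2 ^ m := by omega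
  have hq : 2 ^ (2 ^ v + 2 ^ w) - 2 ^ (2 ^ w) < 2 ^ m := by omega
  have hne : 2 ^ (2 ^ v + 2 ^ w - 1) + 2 ^ (2 ^ w - 1) ≠ 2 ^ (2 ^ v + 2 ^ w) - 2 ^ (2 ^ w) := by
    omega
  set S := {d : ℝ | ∃ p q : ℕ, p < 2 ^ m ∧ q < 2 ^ m ∧ p ≠ q ∧
    d = linf (sobol m p) (sobol m q)} with hS
  have hmem : (2:ℝ) ^ (-(2 ^ v : ℤ) - (2 ^ w : ℤ) + 1) ∈ S :=
    ⟨_, _, hp, hq, hne, hlinf.symm⟩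
  have hbdd : BddBelow S := by
    refine ⟨0, fun d hd => ?_⟩
    obtain ⟨p, q, _, _, _, rfl⟩ := hd
    exact le_trans (abs_nonneg _) (le_max_left _ _)
  have hinf : sInf S ≤ (2:ℝ) ^ (-(2 ^ v : ℤ) - (2 ^ w : ℤ) + 1) := csInf_le hbdd hmem
  have : sep m (2 ^ m) ≤ (1/2) * ((2:ℝ) ^ (-(2 ^ v : ℤ) - (2 ^ w : ℤ) + 1)) := by
    unfold sep
    rw [← hS]
    exact mul_le_mul_of_nonneg_left hinf (by norm_num)
  calc sep m (2 ^ m) ≤ (1/2) * ((2:ℝ) ^ (-(2 ^ v : ℤ) - (2 ^ w : ℤ) + 1)) := this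
  _ = (2:ℝ) ^ (-(2 ^ v : ℤ) - (2 ^ w : ℤ)) := by rw [hT]; ring
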